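/- Let f : X → Y be a local homeomorphism between Hausdorff topological spaces which has the path-lifting property. If X and Y are path-connected and Y is simply connected, then f is a homeomorphism of X onto Y. -/

import Mathlib

open Set unitInterval

private lemma projIcc_image_Icc' (a b : unitInterval) :
    Set.projIcc (0:ℝ) 1 zero_le_one '' Set.Icc (a:ℝ) (b:ℝ) = Set.Icc a b := by
  ext y
  constructor
  · rintro ⟨x, ⟨hax, hxb⟩, rfl⟩
    have hx : x ∈ Set.Icc (0:ℝ) 1 := ⟨le_trans a.2.1 hax, le_trans hxb b.2.2⟩
    rw [Set.projIcc_of_mem _ hx]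
    exact ⟨hax, hxb⟩
  · rintro ⟨hay, hyb⟩
    exact ⟨(y : ℝ), ⟨hay, hyb⟩, Set.projIcc_val zero_le_one y⟩

private lemma isPreconnected_Icc' (a b : unitInterval) : IsPreconnected (Set.Icc a b) := by
  rw [← projIcc_image_Icc']
  exact isPreconnected_Icc.image _ continuous_projIcc.continuousOn

private lemma isCompact_Icc' (a b : unitInterval) : IsCompact (Set.Icc a b) := by
  rw [← projIcc_image_Icc']
  exact isCompact_Icc.image continuous_projIcc

section glue

variable {X Y : Type*} [TopologicalSpace X] [TopologicalSpace Y] [T2Space X]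

/-- Key gluing lemma: if all values `L t0 s`, `s ∈ [a,b]`, lie in the source of a single
chart of the local homeomorphism `f`, and `t ↦ L t s1` is continuous at `t0` for some
`s1 ∈ [a,b]`, then `t ↦ L t s` is continuous at `t0` for all `s ∈ [a,b]`. -/
private lemma key_glue (f : X → Y) (hf : IsLocalHomeomorph f)
    (H : unitInterval × unitInterval → Y) (hH : Continuous H)
    (L : unitInterval → unitInterval → X)
    (hLc : ∀ t, Continuous (L t)) (hLf : ∀ t s, f (L t s) = H (t, s))
    (t0 a b : unitInterval)
    (e : OpenPartialHomeomorph X Y) (hfe : f = e)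
    (hsub : ∀ s ∈ Set.Icc a b, L t0 s ∈ e.source)
    (s1 : unitInterval) (hs1 : s1 ∈ Set.Icc a b)
    (hcont : ContinuousAt (fun t => L t s1) t0) :
    ∀ s ∈ Set.Icc a b, ContinuousAt (fun t => L t s) t0 := by
  have sep : IsSeparatedMap f := T2Space.isSeparatedMap f
  have inj : IsLocallyInjective f := hf.isLocallyInjective
  have ht0 : ∀ s ∈ Set.Icc a b, H (t0, s) ∈ e.target := fun s hs => by
    rw [← hLf t0 s, hfe]; exact e.map_source (hsub s hs)
  obtain ⟨v, w, hv, hw, ht0v, hJw, hvw⟩ :=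
    generalized_tube_lemma isCompact_singleton (isCompact_Icc' a b)
      (e.open_target.preimage hH)
      (fun p hp => by
        obtain ⟨hp1, hp2⟩ := Set.mem_prod.mp hp
        rw [Set.mem_singleton_iff] at hp1
        rw [Set.mem_preimage, ← @Prod.mk.eta _ _ p, hp1]
        exact ht0 p.2 hp2)
  have hNs : (fun t => L t s1) ⁻¹' e.source ∈ nhds t0 :=
    hcont.preimage_mem_nhds (e.open_source.mem_nhds (hsub s1 hs1))
  have hN : v ∩ ((fun t => L t s1) ⁻¹' e.source) ∈ nhds t0 :=
    Filter.inter_mem (hv.mem_nhds (ht0v rfl)) hNs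
  -- For every t in this neighbourhood, L t agrees with e.symm ∘ H(t,·) on [a,b]
  have heq : ∀ t ∈ v ∩ ((fun t => L t s1) ⁻¹' e.source),
      Set.EqOn (L t) (fun s => e.symm (H (t, s))) (Set.Icc a b) := by
    intro t ht
    have htt : ∀ s ∈ Set.Icc a b, H (t, s) ∈ e.target := fun s hs =>
      hvw (Set.mk_mem_prod ht.1 (hJw hs))
    refine sep.eqOn_of_comp_eqOn inj (isPreconnected_Icc' a b) (hLc t).continuousOn
      (e.continuousOn_symm.comp ((hH.comp (continuous_const.prodMk continuous_id)).continuousOn)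
        (fun s hs => htt s hs)) (fun s hs => ?_) hs1 ?_
    · show f (L t s) = f (e.symm (H (t, s)))
      rw [hLf t s, hfe]
      exact (e.right_inv (htt s hs)).symm
    · show L t s1 = e.symm (H (t, s1))
      have h1 : H (t, s1) = e (L t s1) := by rw [← hLf t s1, hfe]
      rw [h1, e.left_inv ht.2]
  intro s hs
  have hev : (fun t => L t s) =ᶠ[nhds t0] fun t => e.symm (H (t, s)) := by
    filter_upwards [hN] with t ht
    exact heq t ht hs
  have k : ContinuousAt (fun t : unitInterval => H (t, s)) t0 :=
    hH.continuousAt.comp ((continuous_id.prodMk continuous_const).continuousAt)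
  have hc2 : ContinuousAt (fun t => e.symm (H (t, s))) t0 :=
    ContinuousAt.comp (g := e.symm) (f := fun t : unitInterval => H (t, s))
      (e.continuousAt_symm (ht0 s hs)) k
  exact hc2.congr hev.symm

end glue

/-- A map has the path-lifting property if every path in `Y` with prescribed initial
point over `f` lifts to a path in `X`. -/
def PathLiftingProperty {X Y : Type*} [TopologicalSpace X] [TopologicalSpace Y]
    (f : X → Y) : Prop :=
  ∀ α : unitInterval → Y, Continuous α → ∀ x₀ : X, f x₀ = α 0 →
    ∃ αt : unitInterval → X, Continuous αt ∧ f ∘ αt = α ∧ αt 0 = x₀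

/-- A local homeomorphism between path-connected Hausdorff spaces with simply
connected codomain which lifts paths is a homeomorphism onto `Y`. -/
theorem homeomorph_of_path_lifting {X Y : Type*} [TopologicalSpace X] [TopologicalSpace Y]
    [T2Space X] [T2Space Y] [PathConnectedSpace X] [PathConnectedSpace Y]
    [SimplyConnectedSpace Y]
    (f : X → Y) (hf : IsLocalHomeomorph f) (hpl : PathLiftingProperty f) :
    IsHomeomorph f := by
  have sep : IsSeparatedMap f := T2Space.isSeparatedMap f
  have inj : IsLocallyInjective f := hf.isLocallyInjective
  have uniq : ∀ g₁ g₂ : unitInterval → X, Continuous g₁ → Continuous g₂ →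
      f ∘ g₁ = f ∘ g₂ → g₁ 0 = g₂ 0 → g₁ = g₂ := fun g₁ g₂ h₁ h₂ he h0 =>
    sep.eq_of_comp_eq inj h₁ h₂ he 0 h0
  have hsurj : Function.Surjective f := by
    intro y
    have x0 : X := Classical.arbitrary X
    let p := PathConnectedSpace.somePath (f x0) y
    obtain ⟨αt, hc, hfa, h0⟩ := hpl p p.continuous x0 p.source.symm
    exact ⟨αt 1, by rw [show f (αt 1) = p 1 from congrFun hfa 1, p.target]⟩
  have hinj : Function.Injective f := by
    intro x1 x2 h12
    let q := PathConnectedSpace.somePath x1 x2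
    let γ : Path (f x1) (f x1) := (q.map hf.continuous).cast rfl h12
    obtain ⟨H⟩ := SimplyConnectedSpace.paths_homotopic γ (Path.refl (f x1))
    have hH : Continuous fun p : unitInterval × unitInterval => H p := H.continuous
    have hH0 : ∀ t, H (t, 0) = f x1 := fun t => H.source t
    have hH1 : ∀ t, H (t, 1) = f x1 := fun t => H.target t
    choose L hLc hLf hL0 using fun t : unitInterval =>
      hpl (fun s => H (t, s)) (hH.comp (continuous_const.prodMk continuous_id)) x1 (hH0 t).symm
    have hLf' : ∀ t s, f (L t s) = H (t, s) := fun t s => congrFun (hLf t) s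
    -- the endpoint map t ↦ L t 1 is continuous
    have contE : Continuous fun t => L t 1 := by
      rw [continuous_iff_continuousAt]
      intro t0
      set S := {s : unitInterval | ContinuousAt (fun t => L t s) t0} with hSdef
      have h0S : (0 : unitInterval) ∈ S := by
        have h : (fun t : unitInterval => L t 0) = fun _ => x1 := funext hL0
        show ContinuousAt (fun t => L t 0) t0
        rw [h]; exact continuousAt_const
      have key : ∀ s0 : unitInterval, ∃ a b, s0 ∈ Set.Icc a b ∧ Set.Icc a b ∈ nhds s0 ∧
          (∀ s1 ∈ Set.Icc a b, s1 ∈ S → Set.Icc a b ⊆ S) := by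
        intro s0
        obtain ⟨e, hes, hfe⟩ := hf (L t0 s0)
        have hmem : (L t0) ⁻¹' e.source ∈ nhds s0 :=
          (hLc t0).continuousAt.preimage_mem_nhds (e.open_source.mem_nhds hes)
        obtain ⟨a, b, h1, h2, h3⟩ := exists_Icc_mem_subset_of_mem_nhds hmem
        exact ⟨a, b, h1, h2, fun s1 hs1 hs1S s hs =>
          key_glue f hf (fun p => H p) hH L hLc hLf' t0 a b e hfe
            (fun s' hs' => h3 hs') s1 hs1 hs1S s hs⟩
      have hSopen : IsOpen S := by
        rw [isOpen_iff_mem_nhds]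
        intro s0 hs0
        obtain ⟨a, b, h1, h2, h3⟩ := key s0
        exact Filter.mem_of_superset h2 (h3 s0 h1 hs0)
      have hSclosed : IsClosed S := by
        rw [← closure_subset_iff_isClosed]
        intro s0 hs0
        obtain ⟨a, b, h1, h2, h3⟩ := key s0
        obtain ⟨s1, hs1ab, hs1S⟩ := mem_closure_iff_nhds.mp hs0 _ h2
        exact h3 s1 hs1ab hs1S h1
      have hSuniv : S = Set.univ :=
        IsClopen.eq_univ ⟨hSclosed, hSopen⟩ ⟨0, h0S⟩
      have : (1 : unitInterval) ∈ S := hSuniv ▸ Set.mem_univ _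
      exact this
    have hconst : L 0 1 = L 1 1 :=
      sep.const_of_comp inj contE
        (fun t t' => by rw [hLf' t 1, hLf' t' 1, hH1, hH1]) 0 1
    have hL0q : L 0 = fun s => q s := by
      refine uniq _ _ (hLc 0) q.continuous (funext fun s => ?_) (by rw [hL0 0, q.source])
      show f (L 0 s) = f (q s)
      rw [hLf' 0 s, show H (0, s) = γ s from H.apply_zero s]
      simp [γ, Path.cast_coe]
    have hL1c : L 1 = fun _ => x1 := by
      refine uniq _ _ (hLc 1) continuous_const (funext fun s => ?_) (hL0 1)
      show f (L 1 s) = f x1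
      rw [hLf' 1 s, show H (1, s) = Path.refl (f x1) s from H.apply_one s, Path.refl_apply]
    have : x2 = x1 := by
      have e1 : L 0 1 = x2 := by rw [hL0q]; exact q.target
      have e2 : L 1 1 = x1 := by rw [hL1c]
      rw [← e1, hconst, e2]
    exact this.symm
  exact ⟨hf.continuous, hf.isOpenMap, hinj, hsurj⟩
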